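/- arXiv:2205.04331 — 4 statements merged into one kernel-verified Lean document; each statement's English description precedes it below -/
import Mathlib

section
/- In any ontological model for ℂⁿ, the map D is convex linear: for all ρ_a, ρ_b ∈ 𝒞 and s ∈ [0,1], D(s·ρ_a + (1−s)·ρ_b) = s·D(ρ_a) + (1−s)·D(ρ_b). -/
open MeasureTheory
open scoped NNReal ENNReal ComplexOrder

noncomputable section

/-- The rank-one projection `|ψ⟩⟨ψ|` associated with a vector `ψ ∈ ℂⁿ`. -/
def proj {n : ℕ} (ψ : EuclideanSpace ℂ (Fin n)) : Matrix (Fin n) (Fin n) ℂ :=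
  Matrix.of fun i j => ψ i * (starRingEnd ℂ) (ψ j)

/-- An ontological model for `ℂⁿ`: a measurable space `Λ` of ontic states, a convex set `C`
of preparable probability measures on `Λ`, measurable response functions `p A : Λ → [0,1]`
for each effect `A` (`0 ≤ A ≤ 1` in the Loewner order), and a map `D` from `C` onto the set
of density matrices reproducing the quantum statistics. -/
structure OntModel (n : ℕ) (Λ : Type*) [MeasurableSpace Λ] where
  C : Set (Measure Λ)
  prob : ∀ ρ ∈ C, IsProbabilityMeasure ρ
  convexC : ∀ ρa ∈ C, ∀ ρb ∈ C, ∀ s : ℝ≥0, s ≤ 1 → s • ρa + (1 - s) • ρb ∈ C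
  p : Matrix (Fin n) (Fin n) ℂ → Λ → ℝ
  p_meas : ∀ A, Measurable (p A)
  p_nonneg : ∀ A l, 0 ≤ p A l
  p_le_one : ∀ A l, p A l ≤ 1
  D : Measure Λ → Matrix (Fin n) (Fin n) ℂ
  D_psd : ∀ ρ ∈ C, (D ρ).PosSemidef
  D_trace : ∀ ρ ∈ C, (D ρ).trace = 1
  D_surj : ∀ W : Matrix (Fin n) (Fin n) ℂ, W.PosSemidef → W.trace = 1 → ∃ ρ ∈ C, D ρ = W
  agree : ∀ ρ ∈ C, ∀ A : Matrix (Fin n) (Fin n) ℂ, A.PosSemidef → (1 - A).PosSemidef →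
    ((∫ l, p A l ∂ρ : ℝ) : ℂ) = (D ρ * A).trace

lemma dot_proj {n : ℕ} (ψ x : EuclideanSpace ℂ (Fin n)) :
    dotProduct (star (x : Fin n → ℂ)) (Matrix.mulVec (proj ψ) x)
      = (starRingEnd ℂ) ((inner ℂ ψ x : ℂ)) * (inner ℂ ψ x : ℂ) := by
  simp only [proj, dotProduct, Matrix.mulVec, Matrix.of_apply, PiLp.inner_apply,
    RCLike.inner_apply, map_sum, _root_.map_mul, Finset.mul_sum, Finset.sum_mul,
    Pi.star_apply, starRingEnd_apply]
  rw [Finset.sum_comm]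
  congr 1; ext i; congr 1; ext j; simp only [star_star]; ring

lemma dot_self {n : ℕ} (x : EuclideanSpace ℂ (Fin n)) :
    dotProduct (star (x : Fin n → ℂ)) (x : Fin n → ℂ) = ((‖x‖ ^ 2 : ℝ) : ℂ) := by
  have h : (inner ℂ x x : ℂ) = ((‖x‖ ^ 2 : ℝ) : ℂ) := by
    rw [inner_self_eq_norm_sq_to_K]; norm_cast
  rw [← h]
  simp only [PiLp.inner_apply, RCLike.inner_apply, dotProduct, Pi.star_apply,
    starRingEnd_apply]
  exact Finset.sum_congr rfl fun i _ => mul_comm _ _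

lemma proj_psd {n : ℕ} (ψ : EuclideanSpace ℂ (Fin n)) : (proj ψ).PosSemidef := by
  refine Matrix.posSemidef_iff_dotProduct_mulVec.mpr ⟨?_, ?_⟩
  · ext i j
    simp [proj, Matrix.conjTranspose_apply, mul_comm]
  · intro x
    have hd := dot_proj ψ (WithLp.toLp 2 x)
    rw [WithLp.ofLp_toLp] at hd
    rw [hd]
    exact star_mul_self_nonneg _

lemma one_sub_proj_psd {n : ℕ} (ψ : EuclideanSpace ℂ (Fin n)) (h : ‖ψ‖ ≤ 1) :
    (1 - proj ψ).PosSemidef := by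
  refine Matrix.posSemidef_iff_dotProduct_mulVec.mpr ⟨?_, ?_⟩
  · have h1 : (proj ψ).IsHermitian := (proj_psd ψ).1
    simpa [Matrix.IsHermitian, Matrix.conjTranspose_sub] using h1.symm ▸ rfl
  · intro x
    let y : EuclideanSpace ℂ (Fin n) := WithLp.toLp 2 x
    show (0:ℂ) ≤ dotProduct (star (y : Fin n → ℂ)) (Matrix.mulVec (1 - proj ψ) y)
    rw [Matrix.sub_mulVec, dotProduct_sub, Matrix.one_mulVec, dot_proj ψ y, dot_self y]
    rw [sub_nonneg]
    have hx : (starRingEnd ℂ) ((inner ℂ ψ y : ℂ)) * (inner ℂ ψ y : ℂ)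
        = ((‖(inner ℂ ψ y : ℂ)‖ ^ 2 : ℝ) : ℂ) := by
      rw [Complex.conj_mul']; norm_cast
    rw [hx]
    have hle : ‖(inner ℂ ψ y : ℂ)‖ ^ 2 ≤ ‖y‖ ^ 2 := by
      have h1 : ‖(inner ℂ ψ y : ℂ)‖ ≤ ‖ψ‖ * ‖y‖ := norm_inner_le_norm ψ y
      have h2 : ‖ψ‖ * ‖y‖ ≤ ‖y‖ := by
        nlinarith [norm_nonneg y, norm_nonneg ψ]
      nlinarith [norm_nonneg (inner ℂ ψ y : ℂ)]
    exact_mod_cast hle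

lemma trace_mul_proj {n : ℕ} (W : Matrix (Fin n) (Fin n) ℂ) (ψ : EuclideanSpace ℂ (Fin n)) :
    (W * proj ψ).trace = dotProduct (star (ψ : Fin n → ℂ)) (Matrix.mulVec W ψ) := by
  simp only [Matrix.trace, Matrix.diag, Matrix.mul_apply, proj, Matrix.of_apply,
    dotProduct, Matrix.mulVec, Pi.star_apply, starRingEnd_apply, Finset.mul_sum]
  congr 1; ext i; congr 1; ext j; ring

lemma matrix_eq_zero {n : ℕ} (X : Matrix (Fin n) (Fin n) ℂ)
    (h : ∀ ψ : EuclideanSpace ℂ (Fin n),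
      dotProduct (star (ψ : Fin n → ℂ)) (Matrix.mulVec X ψ) = 0) : X = 0 := by
  have hT : Matrix.toEuclideanLin X = 0 := by
    rw [← inner_map_self_eq_zero]
    intro ψ
    have h1 := h ψ
    have h2 : (inner ℂ (Matrix.toEuclideanLin X ψ) ψ : ℂ)
        = star (dotProduct (star (ψ : Fin n → ℂ)) (Matrix.mulVec X ψ)) := by
      simp only [PiLp.inner_apply, RCLike.inner_apply, dotProduct, Pi.star_apply,
        star_sum, star_mul', star_star, Matrix.toEuclideanLin_apply,
        PiLp.toLp_apply, starRingEnd_apply]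
    rw [h2, h1, star_zero]
  have hinj := (Matrix.toEuclideanLin (𝕜 := ℂ) (m := Fin n) (n := Fin n)).injective
  exact hinj (by rw [hT, map_zero])

/-- In any ontological model for `ℂⁿ`, the map `D` is convex linear. -/
theorem D_convex_linear {n : ℕ} {Λ : Type*} [MeasurableSpace Λ] (M : OntModel n Λ)
    (ρa ρb : Measure Λ) (ha : ρa ∈ M.C) (hb : ρb ∈ M.C) (s : ℝ≥0) (hs : s ≤ 1) :
    M.D (s • ρa + (1 - s) • ρb)
      = ((s : ℝ) : ℂ) • M.D ρa + (((1 - s : ℝ≥0) : ℝ) : ℂ) • M.D ρb := by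
  set ρ := s • ρa + (1 - s) • ρb with hρ
  have hc : ρ ∈ M.C := M.convexC ρa ha ρb hb s hs
  -- integral linearity
  have hint : ∀ A : Matrix (Fin n) (Fin n) ℂ,
      (∫ l, M.p A l ∂ρ) = (s : ℝ) * (∫ l, M.p A l ∂ρa) + ((1 - s : ℝ≥0) : ℝ) * (∫ l, M.p A l ∂ρb) := by
    intro A
    have hia : Integrable (M.p A) ρa := by
      haveI := M.prob ρa ha
      exact (integrable_const (1 : ℝ)).mono' (M.p_meas A).aestronglyMeasurable
        (Filter.Eventually.of_forall fun l => by
          rw [Real.norm_eq_abs, abs_of_nonneg (M.p_nonneg A l)]; exact M.p_le_one A l)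
    have hib : Integrable (M.p A) ρb := by
      haveI := M.prob ρb hb
      exact (integrable_const (1 : ℝ)).mono' (M.p_meas A).aestronglyMeasurable
        (Filter.Eventually.of_forall fun l => by
          rw [Real.norm_eq_abs, abs_of_nonneg (M.p_nonneg A l)]; exact M.p_le_one A l)
    have hsm : ∀ (c : ℝ≥0) (μ : Measure Λ), c • μ = (c : ℝ≥0∞) • μ := fun c μ => rfl
    rw [hρ, hsm s ρa, hsm (1-s) ρb, integral_add_measure (hia.smul_measure (by simp)) (hib.smul_measure (by simp)),
      integral_smul_measure, integral_smul_measure]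
    rw [ENNReal.coe_toReal, ENNReal.coe_toReal]
    simp [smul_eq_mul]
  -- key trace identity for effects
  have key : ∀ A : Matrix (Fin n) (Fin n) ℂ, A.PosSemidef → (1 - A).PosSemidef →
      (M.D ρ * A).trace
        = ((s : ℝ) : ℂ) * (M.D ρa * A).trace + (((1 - s : ℝ≥0) : ℝ) : ℂ) * (M.D ρb * A).trace := by
    intro A hA hA'
    rw [← M.agree ρ hc A hA hA', ← M.agree ρa ha A hA hA', ← M.agree ρb hb A hA hA', hint A]
    push_cast
    ring
  -- the difference matrix is zero
  set X := M.D ρ - (((s : ℝ) : ℂ) • M.D ρa + (((1 - s : ℝ≥0) : ℝ) : ℂ) • M.D ρb) with hX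
  have hXz : X = 0 := by
    apply matrix_eq_zero
    -- first for small vectors
    have hsmall : ∀ ψ : EuclideanSpace ℂ (Fin n), ‖ψ‖ ≤ 1 →
        dotProduct (star (ψ : Fin n → ℂ)) (Matrix.mulVec X ψ) = 0 := by
      intro ψ hψ
      have h1 : (X * proj ψ).trace = 0 := by
        rw [hX, Matrix.sub_mul, Matrix.add_mul, Matrix.smul_mul, Matrix.smul_mul,
          Matrix.trace_sub, Matrix.trace_add, Matrix.trace_smul, Matrix.trace_smul,
          key (proj ψ) (proj_psd ψ) (one_sub_proj_psd ψ hψ)]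
        simp [smul_eq_mul]
      rw [← trace_mul_proj, h1]
    intro ψ
    by_cases h0 : ψ = 0
    · simp [h0]
    · have hn : (0:ℝ) < ‖ψ‖ := norm_pos_iff.mpr h0
      set c : ℝ := ‖ψ‖⁻¹ with hcdef
      have hc0 : 0 < c := inv_pos.mpr hn
      have hnorm : ‖(c : ℂ) • ψ‖ ≤ 1 := by
        rw [norm_smul, Complex.norm_real, Real.norm_eq_abs, abs_of_pos hc0, hcdef,
          inv_mul_cancel₀ (ne_of_gt hn)]
      set φ : EuclideanSpace ℂ (Fin n) := (c : ℂ) • ψ with hφ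
      have := hsmall φ hnorm
      have hexp : dotProduct (star (φ : Fin n → ℂ)) (Matrix.mulVec X φ)
          = ((c : ℂ) * (c : ℂ)) * dotProduct (star (ψ : Fin n → ℂ)) (Matrix.mulVec X ψ) := by
        have e1 : Matrix.mulVec X (φ : Fin n → ℂ)
            = (c : ℂ) • Matrix.mulVec X (ψ : Fin n → ℂ) := Matrix.mulVec_smul X (c : ℂ) _
        rw [e1]
        simp only [dotProduct, Pi.star_apply, Pi.smul_apply, PiLp.smul_apply, hφ,
          smul_eq_mul, star_mul', Complex.star_def, Complex.conj_ofReal, Finset.mul_sum]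
        congr 1; ext i; ring
      rw [hexp] at this
      have hc0' : ((c : ℂ) * (c : ℂ)) ≠ 0 := by
        simp [ne_of_gt hc0]
      exact (mul_eq_zero.mp this).resolve_left hc0'
  have := sub_eq_zero.mp hXz
  exact this

end
end

section
/- In any ontological model for ℂ² with D injective, for every unit vector ψ ∈ ℂ² and every unit vector ψ⊥ orthogonal to ψ, the measures satisfy ρ_ψ + ρ_{ψ⊥} = ρ₁, where ρ_ψ := D⁻¹(P_ψ), ρ_{ψ⊥} := D⁻¹(P_{ψ⊥}), and ρ₁ := 2·D⁻¹(½I). -/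
open MeasureTheory
open scoped NNReal ENNReal ComplexOrder

noncomputable section

lemma psd_of_vec (c : ℂ) (hc : 0 ≤ c) (v : Fin 2 → ℂ) (A : Matrix (Fin 2) (Fin 2) ℂ)
    (hA : ∀ i j, A i j = c * (v i * star (v j))) : A.PosSemidef := by
  have hcs : star c = c := by
    rw [Complex.star_def, Complex.conj_eq_iff_im]
    exact ((Complex.le_def.mp hc).2).symm
  rw [Matrix.posSemidef_iff_dotProduct_mulVec]
  constructor
  · ext i j
    simp only [Matrix.conjTranspose_apply, hA, star_mul', star_star, hcs]
    ring
  · intro x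
    have h := star_mul_self_nonneg (star (v 0) * x 0 + star (v 1) * x 1)
    have h2 := mul_nonneg hc h
    convert h2 using 1
    simp only [dotProduct, Matrix.mulVec, Fin.sum_univ_two, hA, Pi.star_apply,
      star_add, star_mul', star_star]
    ring

lemma bdd_integrable {Λ : Type*} [MeasurableSpace Λ] (μ : Measure Λ) [IsFiniteMeasure μ]
    (f : Λ → ℝ) (hm : Measurable f) (h0 : ∀ l, 0 ≤ f l) (h1 : ∀ l, f l ≤ 1) :
    Integrable f μ := by
  refine ⟨hm.aestronglyMeasurable, HasFiniteIntegral.of_bounded (C := 1) ?_⟩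
  filter_upwards with l
  rw [Real.norm_eq_abs, abs_le]
  exact ⟨by linarith [h0 l], h1 l⟩

lemma proj_add_proj (ψ ψp : EuclideanSpace ℂ (Fin 2)) (hψ : ‖ψ‖ = 1) (hψp : ‖ψp‖ = 1)
    (horth : inner ℂ ψ ψp = (0 : ℂ)) : proj ψ + proj ψp = 1 := by
  have hψψ : (starRingEnd ℂ) (ψ 0) * ψ 0 + (starRingEnd ℂ) (ψ 1) * ψ 1 = 1 := by
    have h := @inner_self_eq_norm_sq_to_K ℂ _ _ _ _ ψ
    rw [hψ] at h
    simp only [PiLp.inner_apply, Fin.sum_univ_two, RCLike.inner_apply, RCLike.ofReal_one, one_pow] at h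
    linear_combination h
  have hpp : (starRingEnd ℂ) (ψp 0) * ψp 0 + (starRingEnd ℂ) (ψp 1) * ψp 1 = 1 := by
    have h := @inner_self_eq_norm_sq_to_K ℂ _ _ _ _ ψp
    rw [hψp] at h
    simp only [PiLp.inner_apply, Fin.sum_univ_two, RCLike.inner_apply, RCLike.ofReal_one, one_pow] at h
    linear_combination h
  have h01 : (starRingEnd ℂ) (ψ 0) * ψp 0 + (starRingEnd ℂ) (ψ 1) * ψp 1 = 0 := by
    simp only [PiLp.inner_apply, Fin.sum_univ_two, RCLike.inner_apply] at horth
    linear_combination horth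
  have h10 : (starRingEnd ℂ) (ψp 0) * ψ 0 + (starRingEnd ℂ) (ψp 1) * ψ 1 = 0 := by
    have h := congrArg (starRingEnd ℂ) h01
    simp only [map_add, map_mul, map_zero, Complex.conj_conj] at h
    linear_combination h
  set U : Matrix (Fin 2) (Fin 2) ℂ := Matrix.of fun i j => ![ψ, ψp] j i with hUdef
  have hU : U.conjTranspose * U = 1 := by
    ext i j
    fin_cases i <;> fin_cases j <;>
      simp [hUdef, Matrix.mul_apply, Fin.sum_univ_two, Matrix.conjTranspose_apply,
        Matrix.one_apply] <;>
      first
        | exact hψψ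
        | exact h01
        | exact h10
        | exact hpp
  have hU2 : U * U.conjTranspose = 1 := mul_eq_one_comm.mp hU
  calc proj ψ + proj ψp = U * U.conjTranspose := by
        ext i j
        fin_cases i <;> fin_cases j <;>
          simp [proj, hUdef, Matrix.mul_apply, Fin.sum_univ_two,
            Matrix.conjTranspose_apply]
    _ = 1 := hU2



/-- In an ontological model for `ℂ²` with `D` injective, for orthogonal unit vectors
`ψ, ψ⊥` the preparable measures `ρ_ψ = D⁻¹(P_ψ)`, `ρ_{ψ⊥} = D⁻¹(P_{ψ⊥})` satisfy
`ρ_ψ + ρ_{ψ⊥} = ρ₁` where `ρ₁ = 2 · D⁻¹(½ I)`. -/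
theorem rho_add_rho_perp {Λ : Type*} [MeasurableSpace Λ] (M : OntModel 2 Λ)
    (hinj : ∀ ρa ∈ M.C, ∀ ρb ∈ M.C, M.D ρa = M.D ρb → ρa = ρb)
    (ψ ψp : EuclideanSpace ℂ (Fin 2)) (hψ : ‖ψ‖ = 1) (hψp : ‖ψp‖ = 1)
    (horth : inner ℂ ψ ψp = (0 : ℂ))
    (ρψ ρψp ρhalf : Measure Λ)
    (hρψ : ρψ ∈ M.C) (hρψp : ρψp ∈ M.C) (hρhalf : ρhalf ∈ M.C)
    (hDψ : M.D ρψ = proj ψ) (hDψp : M.D ρψp = proj ψp)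
    (hDhalf : M.D ρhalf = (1 / 2 : ℂ) • 1) :
    ρψ + ρψp = (2 : ℝ≥0) • ρhalf := by
  have hsum : proj ψ + proj ψp = 1 := proj_add_proj ψ ψp hψ hψp horth
  have e : (1 : ℝ≥0) - 1/2 = 1/2 := tsub_eq_of_eq_add_rev (by rw [← NNReal.coe_inj]; push_cast; norm_num)
  have hμC := M.convexC ρψ hρψ ρψp hρψp (1/2) (by norm_num)
  rw [e] at hμC
  set μ : Measure Λ := (1/2 : ℝ≥0) • ρψ + (1/2 : ℝ≥0) • ρψp with hμdef
  haveI := M.prob ρψ hρψ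
  haveI := M.prob ρψp hρψp
  -- integral splitting
  have hintegral : ∀ A : Matrix (Fin 2) (Fin 2) ℂ,
      ∫ l, M.p A l ∂μ = (1/2 : ℝ) * ∫ l, M.p A l ∂ρψ + (1/2 : ℝ) * ∫ l, M.p A l ∂ρψp := by
    intro A
    have i1 : Integrable (M.p A) ((1/2 : ℝ≥0) • ρψ) :=
      bdd_integrable _ _ (M.p_meas A) (M.p_nonneg A) (M.p_le_one A)
    have i2 : Integrable (M.p A) ((1/2 : ℝ≥0) • ρψp) :=
      bdd_integrable _ _ (M.p_meas A) (M.p_nonneg A) (M.p_le_one A)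
    rw [hμdef, integral_add_measure i1 i2,
      show ((1/2 : ℝ≥0) • ρψ) = ((1/2 : ℝ≥0) : ℝ≥0∞) • ρψ from rfl,
      show ((1/2 : ℝ≥0) • ρψp) = ((1/2 : ℝ≥0) : ℝ≥0∞) • ρψp from rfl,
      integral_smul_measure, integral_smul_measure]
    norm_num
  -- key: trace identity for effects
  have key : ∀ A : Matrix (Fin 2) (Fin 2) ℂ, A.PosSemidef → ((1 : Matrix (Fin 2) (Fin 2) ℂ) - A).PosSemidef →
      (M.D μ * A).trace = (((1/2 : ℂ) • 1 : Matrix (Fin 2) (Fin 2) ℂ) * A).trace := by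
    intro A hA hA'
    have h0 := (M.agree μ hμC A hA hA').symm
    have h1 := M.agree ρψ hρψ A hA hA'
    have h2 := M.agree ρψp hρψp A hA hA'
    rw [hDψ] at h1
    rw [hDψp] at h2
    rw [h0, hintegral A]
    push_cast
    rw [h1, h2]
    rw [Matrix.smul_mul, Matrix.trace_smul, ← hsum, Matrix.add_mul, Matrix.trace_add]
    simp only [smul_eq_mul]
    ring
  -- the four effects
  have psdE0 : (!![(1:ℂ),0;0,0] : Matrix (Fin 2) (Fin 2) ℂ).PosSemidef := by
    refine psd_of_vec 1 (by norm_num) ![1,0] _ ?_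
    intro i j; fin_cases i <;> fin_cases j <;> simp
  have psdE1 : (!![(0:ℂ),0;0,1] : Matrix (Fin 2) (Fin 2) ℂ).PosSemidef := by
    refine psd_of_vec 1 (by norm_num) ![0,1] _ ?_
    intro i j; fin_cases i <;> fin_cases j <;> simp
  have hc2 : (0:ℂ) ≤ 1/2 := by rw [Complex.le_def]; norm_num
  have psdP : (!![(1/2:ℂ),1/2;1/2,1/2] : Matrix (Fin 2) (Fin 2) ℂ).PosSemidef := by
    refine psd_of_vec (1/2) hc2 ![1,1] _ ?_
    intro i j; fin_cases i <;> fin_cases j <;> simp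
  have psdM : (!![(1/2:ℂ),-(1/2);-(1/2),1/2] : Matrix (Fin 2) (Fin 2) ℂ).PosSemidef := by
    refine psd_of_vec (1/2) hc2 ![1,-1] _ ?_
    intro i j; fin_cases i <;> fin_cases j <;> simp
  have psdI1 : (!![(1/2:ℂ), Complex.I/2; -(Complex.I/2), 1/2] : Matrix (Fin 2) (Fin 2) ℂ).PosSemidef := by
    refine psd_of_vec (1/2) hc2 ![1, -Complex.I] _ ?_
    intro i j; fin_cases i <;> fin_cases j <;> simp [Complex.ext_iff]
  have psdI2 : (!![(1/2:ℂ), -(Complex.I/2); Complex.I/2, 1/2] : Matrix (Fin 2) (Fin 2) ℂ).PosSemidef := by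
    refine psd_of_vec (1/2) hc2 ![1, Complex.I] _ ?_
    intro i j; fin_cases i <;> fin_cases j <;> simp [Complex.ext_iff]
  have sub1 : (1 : Matrix (Fin 2) (Fin 2) ℂ) - !![(1:ℂ),0;0,0] = !![(0:ℂ),0;0,1] := by
    ext i j; fin_cases i <;> fin_cases j <;> simp [Matrix.one_apply]
  have sub2 : (1 : Matrix (Fin 2) (Fin 2) ℂ) - !![(0:ℂ),0;0,1] = !![(1:ℂ),0;0,0] := by
    ext i j; fin_cases i <;> fin_cases j <;> simp [Matrix.one_apply]
  have sub3 : (1 : Matrix (Fin 2) (Fin 2) ℂ) - !![(1/2:ℂ),1/2;1/2,1/2] = !![(1/2:ℂ),-(1/2);-(1/2),1/2] := by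
    ext i j; fin_cases i <;> fin_cases j <;> simp [Matrix.one_apply] <;> norm_num
  have sub4 : (1 : Matrix (Fin 2) (Fin 2) ℂ) - !![(1/2:ℂ), Complex.I/2; -(Complex.I/2), 1/2]
      = !![(1/2:ℂ), -(Complex.I/2); Complex.I/2, 1/2] := by
    ext i j; fin_cases i <;> fin_cases j <;> simp [Matrix.one_apply] <;> norm_num
  have k1 := key _ psdE0 (by rw [sub1]; exact psdE1)
  have k2 := key _ psdE1 (by rw [sub2]; exact psdE0)
  have k3 := key _ psdP (by rw [sub3]; exact psdM)
  have k4 := key _ psdI1 (by rw [sub4]; exact psdI2)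
  simp only [Matrix.trace, Matrix.diag, Matrix.mul_apply, Fin.sum_univ_two,
    Matrix.cons_val', Matrix.cons_val_zero, Matrix.cons_val_one, Matrix.head_cons,
    Matrix.head_fin_const, Matrix.empty_val', Matrix.cons_val_fin_one,
    Matrix.smul_apply, Matrix.one_apply, smul_eq_mul] at k1 k2 k3 k4
  norm_num at k1 k2 k3 k4
  have hDμ : M.D μ = (1/2 : ℂ) • 1 := by
    ext i j
    fin_cases i <;> fin_cases j <;>
      simp only [Matrix.smul_apply, Matrix.one_apply, smul_eq_mul] <;> norm_num
    · linear_combination k1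
    · linear_combination k3 + Complex.I * k4 - (1/2 + Complex.I/2) * k1 - (1/2 + Complex.I/2) * k2 + (M.D μ 0 1 - M.D μ 1 0)/2 * Complex.I_sq
    · linear_combination k3 - Complex.I * k4 - (1/2 - Complex.I/2) * k1 - (1/2 - Complex.I/2) * k2 + (M.D μ 1 0 - M.D μ 0 1)/2 * Complex.I_sq
    · linear_combination k2
  have hμρ : μ = ρhalf := hinj μ hμC ρhalf hρhalf (by rw [hDμ, hDhalf])
  rw [← hμρ, hμdef, smul_add, smul_smul, smul_smul]
  norm_num
end
end

section
/- In any ontological model for ℂ² with D injective, for every unit vector ψ ∈ ℂ² and every measurable set B ⊆ Λ: ρ_ψ(B) = ρ₁(B ∩ Λ_ψ), where ρ_ψ := D⁻¹(P_ψ), ρ₁ := 2·D⁻¹(½I), and Λ_ψ := {λ ∈ Λ : p_{P_ψ}(λ) = 1}. -/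
open MeasureTheory
open scoped NNReal ENNReal ComplexOrder

noncomputable section

/-- The vector orthogonal to `ψ` in `ℂ²`. -/
def phiv (ψ : EuclideanSpace ℂ (Fin 2)) : EuclideanSpace ℂ (Fin 2) :=
  WithLp.toLp 2 ![-((starRingEnd ℂ) (ψ 1)), (starRingEnd ℂ) (ψ 0)]

lemma unit_sum {ψ : EuclideanSpace ℂ (Fin 2)} (hψ : ‖ψ‖ = 1) :
    ψ 0 * (starRingEnd ℂ) (ψ 0) + ψ 1 * (starRingEnd ℂ) (ψ 1) = 1 := by
  have h : ‖ψ 0‖ ^ 2 + ‖ψ 1‖ ^ 2 = 1 := by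
    have h1 := EuclideanSpace.norm_eq ψ
    rw [hψ] at h1
    have h2 : (∑ i, ‖ψ i‖ ^ 2) = 1 := Real.sqrt_eq_one.mp h1.symm
    simpa [Fin.sum_univ_two] using h2
  have h0 : ∀ i, ψ i * (starRingEnd ℂ) (ψ i) = ((‖ψ i‖ ^ 2 : ℝ) : ℂ) := by
    intro i
    rw [Complex.mul_conj]
    rw [Complex.normSq_eq_norm_sq]
  rw [h0 0, h0 1, ← Complex.ofReal_add, h]
  norm_num

lemma one_sub_proj {ψ : EuclideanSpace ℂ (Fin 2)}
    (hu : ψ 0 * (starRingEnd ℂ) (ψ 0) + ψ 1 * (starRingEnd ℂ) (ψ 1) = 1) :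
    (1 : Matrix (Fin 2) (Fin 2) ℂ) - proj ψ = proj (phiv ψ) := by
  have key : ∀ i j : Fin 2, ((1 : Matrix (Fin 2) (Fin 2) ℂ) - proj ψ) i j = proj (phiv ψ) i j := by
    simp only [Fin.forall_fin_two]
    refine ⟨⟨?_, ?_⟩, ?_, ?_⟩ <;>
      simp [proj, phiv, Matrix.one_apply, map_mul, map_neg] <;>
      first
        | linear_combination hu
        | linear_combination -hu
        | ring
  ext i j
  exact key i j

lemma proj_trace {ψ : EuclideanSpace ℂ (Fin 2)}
    (hu : ψ 0 * (starRingEnd ℂ) (ψ 0) + ψ 1 * (starRingEnd ℂ) (ψ 1) = 1) :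
    (proj ψ).trace = 1 := by
  simp [Matrix.trace, Fin.sum_univ_two, proj]
  linear_combination hu

lemma proj_mul_self {ψ : EuclideanSpace ℂ (Fin 2)}
    (hu : ψ 0 * (starRingEnd ℂ) (ψ 0) + ψ 1 * (starRingEnd ℂ) (ψ 1) = 1) :
    proj ψ * proj ψ = proj ψ := by
  ext i j
  simp [proj, Matrix.mul_apply, Fin.sum_univ_two]
  linear_combination (ψ i * (starRingEnd ℂ) (ψ j)) * hu

lemma eff_determines (W W' : Matrix (Fin 2) (Fin 2) ℂ)
    (h : ∀ A : Matrix (Fin 2) (Fin 2) ℂ, A.PosSemidef →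
      ((1 : Matrix (Fin 2) (Fin 2) ℂ) - A).PosSemidef → (W * A).trace = (W' * A).trace) :
    W = W' := by
  have effect : ∀ v : EuclideanSpace ℂ (Fin 2),
      v 0 * (starRingEnd ℂ) (v 0) + v 1 * (starRingEnd ℂ) (v 1) = 1 →
      (W * proj v).trace = (W' * proj v).trace := fun v hv =>
    h (proj v) (proj_psd v) (by rw [one_sub_proj hv]; exact proj_psd (phiv v))
  set r : ℝ := (Real.sqrt 2)⁻¹ with hrdef
  have hr2 : (r : ℂ) * (r : ℂ) = 1 / 2 := by
    have : r * r = 1 / 2 := by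
      rw [hrdef, ← mul_inv]
      rw [Real.mul_self_sqrt (by norm_num : (2:ℝ) ≥ 0)]
      norm_num
    calc (r:ℂ) * (r:ℂ) = ((r * r : ℝ) : ℂ) := by push_cast; ring
      _ = 1 / 2 := by rw [this]; norm_num
  have hrne : (r : ℂ) * (r : ℂ) ≠ 0 := by rw [hr2]; norm_num
  have he0 := effect (show EuclideanSpace ℂ (Fin 2) from WithLp.toLp 2 ![1, 0]) (by simp)
  have he1 := effect (show EuclideanSpace ℂ (Fin 2) from WithLp.toLp 2 ![0, 1]) (by simp)
  have hvp := effect (show EuclideanSpace ℂ (Fin 2) from WithLp.toLp 2 ![(r:ℂ), (r:ℂ)])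
    (by simp [Complex.conj_ofReal]; linear_combination 2 * hr2)
  have hvy := effect (show EuclideanSpace ℂ (Fin 2) from WithLp.toLp 2 ![(r:ℂ), (r:ℂ) * Complex.I])
    (by simp [Complex.conj_ofReal, map_mul, Complex.conj_I]
        linear_combination 2 * hr2 - (r:ℂ) * (r:ℂ) * Complex.I_mul_I)
  simp only [Matrix.trace, Matrix.mul_apply, Fin.sum_univ_two, proj, Matrix.of_apply, WithLp.ofLp_toLp,
    Matrix.diag_apply, Matrix.cons_val_zero, Matrix.cons_val_one, Matrix.head_cons,
    map_one, map_zero, map_mul, mul_one, mul_zero, one_mul, zero_mul, add_zero, zero_add,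
    Complex.conj_ofReal, Complex.conj_I] at he0 he1 hvp hvy
  have hT : W 0 0 + W 0 1 + W 1 0 + W 1 1 = W' 0 0 + W' 0 1 + W' 1 0 + W' 1 1 :=
    mul_left_cancel₀ hrne (by linear_combination hvp)
  have hU : W 0 0 + Complex.I * W 0 1 - Complex.I * W 1 0 + W 1 1
      = W' 0 0 + Complex.I * W' 0 1 - Complex.I * W' 1 0 + W' 1 1 :=
    mul_left_cancel₀ hrne
      (by linear_combination hvy + (W 1 1 - W' 1 1) * (r:ℂ) * (r:ℂ) * Complex.I_mul_I)
  have hD : W 0 1 - W 1 0 = W' 0 1 - W' 1 0 :=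
    mul_left_cancel₀ Complex.I_ne_zero (by linear_combination hU - he0 - he1)
  have key : ∀ i j : Fin 2, W i j = W' i j := by
    simp only [Fin.forall_fin_two]
    refine ⟨⟨he0, ?_⟩, ?_, he1⟩
    · linear_combination (hT + hD - he0 - he1) / 2
    · linear_combination (hT - hD - he0 - he1) / 2
  ext i j
  exact key i j

/-- In an ontological model for `ℂ²` with `D` injective, for every unit vector `ψ` and
every measurable set `B ⊆ Λ`: `ρ_ψ(B) = ρ₁(B ∩ Λ_ψ)`, where `ρ_ψ = D⁻¹(P_ψ)`,
`ρ₁ = 2 · D⁻¹(½ I)` and `Λ_ψ = {λ : p_{P_ψ}(λ) = 1}`. -/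
theorem rho_eq_rho1_restrict {Λ : Type*} [MeasurableSpace Λ] (M : OntModel 2 Λ)
    (hinj : ∀ ρa ∈ M.C, ∀ ρb ∈ M.C, M.D ρa = M.D ρb → ρa = ρb)
    (ψ : EuclideanSpace ℂ (Fin 2)) (hψ : ‖ψ‖ = 1)
    (ρψ ρhalf : Measure Λ) (hρψ : ρψ ∈ M.C) (hρhalf : ρhalf ∈ M.C)
    (hDψ : M.D ρψ = proj ψ) (hDhalf : M.D ρhalf = (1 / 2 : ℂ) • 1)
    (B : Set Λ) (hB : MeasurableSet B) :
    ρψ B = ((2 : ℝ≥0) • ρhalf) (B ∩ {l | M.p (proj ψ) l = 1}) := by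
  classical
  have hu : ψ 0 * (starRingEnd ℂ) (ψ 0) + ψ 1 * (starRingEnd ℂ) (ψ 1) = 1 := unit_sum hψ
  set P : Matrix (Fin 2) (Fin 2) ℂ := proj ψ with hPdef
  set S : Set Λ := {l | M.p P l = 1} with hSdef
  have hPpsd : P.PosSemidef := proj_psd ψ
  have hQpsd : ((1 : Matrix (Fin 2) (Fin 2) ℂ) - P).PosSemidef := by
    rw [hPdef, one_sub_proj hu]; exact proj_psd (phiv ψ)
  have hPtr : P.trace = 1 := proj_trace hu
  have hPP : P * P = P := proj_mul_self hu
  have hQtr : ((1 : Matrix (Fin 2) (Fin 2) ℂ) - P).trace = 1 := by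
    rw [Matrix.trace_sub, Matrix.trace_one, hPtr]
    norm_num
  have h1subQpsd : ((1 : Matrix (Fin 2) (Fin 2) ℂ) - (1 - P)).PosSemidef := by
    simpa using hPpsd
  obtain ⟨ρφ, hρφ, hDφ⟩ := M.D_surj (1 - P) hQpsd hQtr
  have hPψ := M.prob ρψ hρψ
  have hPφ := M.prob ρφ hρφ
  have hPh := M.prob ρhalf hρhalf
  have hint : ∀ (A : Matrix (Fin 2) (Fin 2) ℂ) (ρ : Measure Λ), IsProbabilityMeasure ρ →
      Integrable (M.p A) ρ := by
    intro A ρ hρ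
    refine Integrable.mono' (integrable_const 1) (M.p_meas A).aestronglyMeasurable ?_
    filter_upwards with l
    rw [Real.norm_eq_abs, abs_of_nonneg (M.p_nonneg A l)]
    exact M.p_le_one A l
  -- the mixture ½ ρψ + ½ ρφ
  have hmixC0 : ((1/2 : ℝ≥0) • ρψ + (1 - 1/2 : ℝ≥0) • ρφ) ∈ M.C :=
    M.convexC ρψ hρψ ρφ hρφ (1/2) (by norm_num)
  have h12 : (1 - 1/2 : ℝ≥0) = (1/2 : ℝ≥0) := by
    rw [← NNReal.coe_inj]
    rw [NNReal.coe_sub (by norm_num)]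
    norm_num
  rw [h12] at hmixC0
  set ρmix : Measure Λ := (1/2 : ℝ≥0) • ρψ + (1/2 : ℝ≥0) • ρφ with hmixdef
  have hmixC : ρmix ∈ M.C := hmixC0
  have hDmix : M.D ρhalf = M.D ρmix := by
    apply eff_determines
    intro A hA hA'
    have hb := M.agree ρhalf hρhalf A hA hA'
    have ha := M.agree ρmix hmixC A hA hA'
    have haψ := M.agree ρψ hρψ A hA hA'
    have haφ := M.agree ρφ hρφ A hA hA'
    rw [hDψ] at haψ
    rw [hDφ] at haφ
    have hsplit : (∫ l, M.p A l ∂ρmix)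
        = (1/2 : ℝ≥0) • (∫ l, M.p A l ∂ρψ) + (1/2 : ℝ≥0) • (∫ l, M.p A l ∂ρφ) := by
      rw [hmixdef, integral_add_measure ((hint A ρψ hPψ).smul_measure_nnreal)
        ((hint A ρφ hPφ).smul_measure_nnreal),
        integral_smul_nnreal_measure, integral_smul_nnreal_measure]
    have htr : (P * A).trace + ((1 - P) * A).trace = A.trace := by
      rw [← Matrix.trace_add, ← Matrix.add_mul, add_sub_cancel, one_mul]
    have lhs : ((∫ l, M.p A l ∂ρhalf : ℝ) : ℂ) = (1/2 : ℂ) * A.trace := by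
      rw [hb, hDhalf, Matrix.smul_mul, one_mul, Matrix.trace_smul]
      simp [smul_eq_mul]
    have rhs : ((∫ l, M.p A l ∂ρmix : ℝ) : ℂ) = (1/2 : ℂ) * A.trace := by
      rw [hsplit]
      have hcoe : ((1/2 : ℝ≥0) : ℝ) = (1/2 : ℝ) := by norm_num
      rw [NNReal.smul_def, NNReal.smul_def, hcoe, smul_eq_mul, smul_eq_mul]
      push_cast
      rw [haψ, haφ]
      linear_combination (1/2 : ℂ) * htr
    rw [← hb, ← ha, lhs, rhs]
  have hhalfmix : ρhalf = ρmix := hinj ρhalf hρhalf ρmix hmixC hDmix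
  -- p_P = 1 a.e. w.r.t. ρψ
  have hIψ : ∫ l, M.p P l ∂ρψ = 1 := by
    have h := M.agree ρψ hρψ P hPpsd hQpsd
    rw [hDψ, hPP, hPtr] at h
    exact_mod_cast h
  have hae1 : ∀ᵐ l ∂ρψ, M.p P l = 1 := by
    have hi : Integrable (fun l => 1 - M.p P l) ρψ := (integrable_const 1).sub (hint P ρψ hPψ)
    have hz : ∫ l, (1 - M.p P l) ∂ρψ = 0 := by
      rw [integral_sub (integrable_const 1) (hint P ρψ hPψ), integral_const, hIψ]
      simp
    have h0 := (integral_eq_zero_iff_of_nonneg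
      (fun l => sub_nonneg.2 (M.p_le_one P l)) hi).mp hz
    filter_upwards [h0] with l hl
    have : 1 - M.p P l = 0 := hl
    linarith
  have hn1 : ρψ {l | ¬ M.p P l = 1} = 0 := ae_iff.mp hae1
  have hψBS : ρψ (B ∩ S) = ρψ B := by
    refine le_antisymm (measure_mono Set.inter_subset_left) ?_
    calc ρψ B ≤ ρψ ((B ∩ S) ∪ {l | ¬ M.p P l = 1}) := by
          refine measure_mono fun l hl => ?_
          by_cases h : M.p P l = 1
          · exact Or.inl ⟨hl, h⟩
          · exact Or.inr h
      _ ≤ ρψ (B ∩ S) + ρψ {l | ¬ M.p P l = 1} := measure_union_le _ _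
      _ = ρψ (B ∩ S) := by rw [hn1, add_zero]
  -- p_P = 0 a.e. w.r.t. ρφ
  have hIφ : ∫ l, M.p P l ∂ρφ = 0 := by
    have h := M.agree ρφ hρφ P hPpsd hQpsd
    rw [hDφ] at h
    have hz : ((1 : Matrix (Fin 2) (Fin 2) ℂ) - P) * P = 0 := by
      rw [Matrix.sub_mul, Matrix.one_mul, hPP, sub_self]
    rw [hz, Matrix.trace_zero] at h
    exact_mod_cast h
  have hae0 := (integral_eq_zero_iff_of_nonneg
    (fun l => M.p_nonneg P l) (hint P ρφ hPφ)).mp hIφ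
  have hn0 : ρφ {l | ¬ M.p P l = 0} = 0 := by
    have := ae_iff.mp hae0
    simpa using this
  have hφS : ρφ (B ∩ S) = 0 := by
    refine measure_mono_null (fun l hl => ?_) hn0
    have h1 : M.p P l = 1 := hl.2
    simp only [Set.mem_setOf_eq, h1]
    norm_num
  -- put everything together
  rw [hhalfmix, hmixdef]
  simp only [Measure.smul_apply, Measure.add_apply]
  rw [hφS, ← hψBS]
  rw [smul_zero, add_zero, smul_smul]
  norm_num
end
end

section
/- There is no measure space (Λ, 𝓕, μ) with μ(Λ) = 2 together with a family of measurable sets A_ψ ⊆ Λ, indexed by the unit vectors ψ ∈ ℂ², such that μ(A_ψ ∩ A_φ) = |⟨ψ, φ⟩|² (= tr(P_ψ·P_φ)) for all unit vectors ψ, φ ∈ ℂ². -/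
open MeasureTheory

noncomputable section

universe u

/-- helper vector in `ℂ²` with real coordinates -/
noncomputable def noOverlapAux_v (a b : ℝ) : EuclideanSpace ℂ (Fin 2) :=
  (WithLp.equiv 2 (Fin 2 → ℂ)).symm ![(a:ℂ), (b:ℂ)]

lemma noOverlapAux_norm0 : ‖noOverlapAux_v 1 0‖ = 1 := by
  simp [noOverlapAux_v, EuclideanSpace.norm_eq, Fin.sum_univ_two]

lemma noOverlapAux_norm1 : ‖noOverlapAux_v (1/2) (Real.sqrt 3 / 2)‖ = 1 := by
  have h3 : Real.sqrt 3 ^ 2 = 3 := Real.sq_sqrt (by norm_num)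
  simp [noOverlapAux_v, EuclideanSpace.norm_eq, Fin.sum_univ_two, abs_of_nonneg,
    Real.sqrt_nonneg]
  rw [div_pow, h3]
  norm_num

lemma noOverlapAux_norm2 : ‖noOverlapAux_v (-(1/2)) (Real.sqrt 3 / 2)‖ = 1 := by
  have h3 : Real.sqrt 3 ^ 2 = 3 := Real.sq_sqrt (by norm_num)
  simp [noOverlapAux_v, EuclideanSpace.norm_eq, Fin.sum_univ_two, abs_of_nonneg,
    Real.sqrt_nonneg]
  rw [div_pow, h3]
  norm_num

lemma noOverlapAux_inner01 :
    ‖(inner ℂ (noOverlapAux_v 1 0) (noOverlapAux_v (1/2) (Real.sqrt 3/2)) : ℂ)‖^2 = 1/4 := by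
  simp [noOverlapAux_v, PiLp.inner_apply, Fin.sum_univ_two, RCLike.inner_apply]
  norm_num

lemma noOverlapAux_inner02 :
    ‖(inner ℂ (noOverlapAux_v 1 0) (noOverlapAux_v (-(1/2)) (Real.sqrt 3/2)) : ℂ)‖^2 = 1/4 := by
  simp [noOverlapAux_v, PiLp.inner_apply, Fin.sum_univ_two, RCLike.inner_apply]
  norm_num

lemma noOverlapAux_inner12 :
    ‖(inner ℂ (noOverlapAux_v (1/2) (Real.sqrt 3/2))
        (noOverlapAux_v (-(1/2)) (Real.sqrt 3/2)) : ℂ)‖^2 = 1/4 := by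
  have h3 : (Real.sqrt 3 : ℂ) * Real.sqrt 3 = 3 := by
    norm_cast
    rw [Real.mul_self_sqrt (by norm_num)]
  simp [noOverlapAux_v, PiLp.inner_apply, Fin.sum_univ_two, RCLike.inner_apply,
    Complex.conj_ofNat]
  rw [show (-((2:ℂ)⁻¹ * 2⁻¹) + ↑(Real.sqrt 3) / 2 * (↑(Real.sqrt 3) / 2)) = 1/2 by
    field_simp; linear_combination h3]
  norm_num

/-- There is no measure space `(Λ, 𝓕, μ)` of total mass 2 together with measurable sets
`A_ψ ⊆ Λ`, indexed by the unit vectors `ψ ∈ ℂ²`, with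
`μ(A_ψ ∩ A_φ) = |⟨ψ, φ⟩|² (= tr(P_ψ P_φ))` for all unit vectors `ψ, φ`. -/
theorem no_overlap_family :
    ¬ ∃ (Λ : Type u) (_ : MeasurableSpace Λ) (μ : Measure Λ)
        (A : EuclideanSpace ℂ (Fin 2) → Set Λ),
      μ Set.univ = 2 ∧
      (∀ ψ : EuclideanSpace ℂ (Fin 2), ‖ψ‖ = 1 → MeasurableSet (A ψ)) ∧
      (∀ ψ φ : EuclideanSpace ℂ (Fin 2), ‖ψ‖ = 1 → ‖φ‖ = 1 →
        μ (A ψ ∩ A φ) = ENNReal.ofReal (‖(inner ℂ ψ φ : ℂ)‖ ^ 2)) := by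
  rintro ⟨Λ, mΛ, μ, A, hμuniv, hmeas, hover⟩
  set v0 := noOverlapAux_v 1 0
  set v1 := noOverlapAux_v (1/2) (Real.sqrt 3/2)
  set v2 := noOverlapAux_v (-(1/2)) (Real.sqrt 3/2)
  have hn0 : ‖v0‖ = 1 := noOverlapAux_norm0
  have hn1 : ‖v1‖ = 1 := noOverlapAux_norm1
  have hn2 : ‖v2‖ = 1 := noOverlapAux_norm2
  -- each set has measure 1
  have hself : ∀ ψ : EuclideanSpace ℂ (Fin 2), ‖ψ‖ = 1 → μ (A ψ) = 1 := by
    intro ψ h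
    have := hover ψ ψ h h
    rw [Set.inter_self] at this
    rw [this, inner_self_eq_norm_sq_to_K (𝕜 := ℂ), h]
    simp
  have h0 : μ (A v0) = 1 := hself v0 hn0
  have h1 : μ (A v1) = 1 := hself v1 hn1
  have h2 : μ (A v2) = 1 := hself v2 hn2
  -- pairwise overlaps
  have h01 : μ (A v0 ∩ A v1) = ENNReal.ofReal (1/4) := by
    rw [hover v0 v1 hn0 hn1, noOverlapAux_inner01]
  have h02 : μ (A v0 ∩ A v2) = ENNReal.ofReal (1/4) := by
    rw [hover v0 v2 hn0 hn2, noOverlapAux_inner02]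
  have h12 : μ (A v1 ∩ A v2) = ENNReal.ofReal (1/4) := by
    rw [hover v1 v2 hn1 hn2, noOverlapAux_inner12]
  -- inclusion–exclusion lower bound
  have e1 : μ (A v0 ∪ A v1) + μ (A v0 ∩ A v1) = μ (A v0) + μ (A v1) :=
    measure_union_add_inter _ (hmeas v1 hn1)
  have e2 : μ ((A v0 ∪ A v1) ∪ A v2) + μ ((A v0 ∪ A v1) ∩ A v2)
      = μ (A v0 ∪ A v1) + μ (A v2) :=
    measure_union_add_inter _ (hmeas v2 hn2)
  have e3 : μ ((A v0 ∪ A v1) ∩ A v2) ≤ μ (A v0 ∩ A v2) + μ (A v1 ∩ A v2) := by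
    rw [Set.union_inter_distrib_right]
    exact measure_union_le _ _
  have hu2 : μ ((A v0 ∪ A v1) ∪ A v2) ≤ ENNReal.ofReal 2 := by
    rw [show ENNReal.ofReal 2 = (2:ENNReal) by simp, ← hμuniv]
    exact measure_mono (Set.subset_univ _)
  -- combine: 3 = μ0 + μ1 + μ2 ≤ 2 + 3/4
  have key : ENNReal.ofReal 3 ≤ ENNReal.ofReal (11/4) := by
    calc ENNReal.ofReal 3 = (μ (A v0) + μ (A v1)) + μ (A v2) := by
          rw [h0, h1, h2, show ENNReal.ofReal 3 = (3:ENNReal) by simp]; norm_num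
      _ = (μ (A v0 ∪ A v1) + μ (A v0 ∩ A v1)) + μ (A v2) := by rw [e1]
      _ = (μ (A v0 ∪ A v1) + μ (A v2)) + μ (A v0 ∩ A v1) := by ring
      _ = (μ ((A v0 ∪ A v1) ∪ A v2) + μ ((A v0 ∪ A v1) ∩ A v2)) + μ (A v0 ∩ A v1) := by
          rw [e2]
      _ ≤ (ENNReal.ofReal 2 + (μ (A v0 ∩ A v2) + μ (A v1 ∩ A v2))) + μ (A v0 ∩ A v1) := by
          gcongr
      _ = ENNReal.ofReal (11/4) := by
          rw [h01, h02, h12,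
            ← ENNReal.ofReal_add (by norm_num) (by norm_num),
            ← ENNReal.ofReal_add (by norm_num) (by norm_num),
            ← ENNReal.ofReal_add (by norm_num) (by norm_num)]
          norm_num
  rw [ENNReal.ofReal_le_ofReal_iff (by norm_num)] at key
  norm_num at key
end
end
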